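/- Let R be a commutative Bezout ring of stable range 2 and let a ∈ R be a regular element. Then a is pseudo-irreducible if and only if the quotient ring R/aR is an indecomposable ring, i.e. its only idempotents are 0 and 1. -/

import Mathlib

/-- A regular element: a nonzero element that is not a zero divisor. -/
def IsRegularElem {R : Type*} [CommRing R] (a : R) : Prop :=
  a ≠ 0 ∧ ∀ x : R, a * x = 0 → x = 0

/-- Stable range 2. -/
def HasStableRange2 (R : Type*) [CommRing R] : Prop :=
  ∀ a b c : R, Ideal.span {a, b, c} = ⊤ →
    ∃ x y : R, Ideal.span {a + c * x, b + c * y} = ⊤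

/-- Stable range 1. -/
def HasStableRange1 (S : Type*) [CommRing S] : Prop :=
  ∀ a b : S, Ideal.span {a, b} = ⊤ → ∃ y : S, IsUnit (a + b * y)

/-- Inpseudo-irreducible element: any factorization is comaximal. -/
def IsInpseudoIrreducible {R : Type*} [CommRing R] (a : R) : Prop :=
  ∀ b c : R, a = b * c → Ideal.span {b, c} = ⊤

/-- Pseudo-irreducible element. -/
def IsPseudoIrreducible {R : Type*} [CommRing R] (a : R) : Prop :=
  ∀ b c : R, a = b * c → ¬IsUnit b → ¬IsUnit c → Ideal.span {b, c} ≠ ⊤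

/-- Adequate element of a Bezout ring. -/
def IsAdequateElem {R : Type*} [CommRing R] (a : R) : Prop :=
  ∀ b : R, ∃ r s : R, a = r * s ∧ Ideal.span {r, b} = ⊤ ∧
    ∀ s' : R, ¬IsUnit s' → s' ∣ s → Ideal.span {s', b} ≠ ⊤

/-- Avoidable element. -/
def IsAvoidableElem {R : Type*} [CommRing R] (a : R) : Prop :=
  ∀ b c : R, Ideal.span {a, b, c} = ⊤ →
    ∃ r s : R, a = r * s ∧ Ideal.span {r, b} = ⊤ ∧ Ideal.span {s, c} = ⊤ ∧
      Ideal.span {r, s} = ⊤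

/-- Gelfand element. -/
def IsGelfandElem {R : Type*} [CommRing R] (a : R) : Prop :=
  ∀ b c : R, Ideal.span {a, b, c} = ⊤ →
    ∃ r s : R, a = r * s ∧ Ideal.span {r, b} = ⊤ ∧ Ideal.span {s, c} = ⊤

/-- Semipotent element. -/
def IsSemipotentElem {R : Type*} [CommRing R] (a : R) : Prop :=
  ∀ b : R,
    Ideal.Quotient.mk (Ideal.span {a}) b ∉
      Ideal.jacobson (⊥ : Ideal (R ⧸ Ideal.span ({a} : Set R))) →
    ∃ r s : R, ¬IsUnit r ∧ ¬IsUnit s ∧ a = r * s ∧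
      Ideal.span {r, b} = ⊤ ∧ Ideal.span {r, s} = ⊤

/-- Gelfand ring. -/
def IsGelfandRing (S : Type*) [CommRing S] : Prop :=
  ∀ a b : S, a + b = 1 → ∃ r s : S, (1 + a * r) * (1 + b * s) = 0

/-- Clean ring: every element is a unit plus an idempotent. -/
def IsCleanRing (S : Type*) [CommRing S] : Prop :=
  ∀ a : S, ∃ u e : S, IsUnit u ∧ IsIdempotentElem e ∧ a = u + e

/-- Von Neumann regular ring. -/
def IsVNRegularRing (S : Type*) [CommRing S] : Prop :=
  ∀ a : S, ∃ x : S, a = a * x * a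

/-- Semiregular ring: S/J(S) is von Neumann regular and idempotents lift modulo J(S). -/
def IsSemiregularRing (S : Type*) [CommRing S] : Prop :=
  IsVNRegularRing (S ⧸ Ideal.jacobson (⊥ : Ideal S)) ∧
  ∀ x : S, IsIdempotentElem (Ideal.Quotient.mk (Ideal.jacobson (⊥ : Ideal S)) x) →
    ∃ e : S, IsIdempotentElem e ∧
      Ideal.Quotient.mk (Ideal.jacobson (⊥ : Ideal S)) e =
        Ideal.Quotient.mk (Ideal.jacobson (⊥ : Ideal S)) x

/-- Semipotent ring: every principal ideal not contained in the Jacobson radical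
contains a nonzero idempotent. -/
def IsSemipotentRing (S : Type*) [CommRing S] : Prop :=
  ∀ b : S, ¬(Ideal.span {b} ≤ Ideal.jacobson (⊥ : Ideal S)) →
    ∃ e : S, e ≠ 0 ∧ IsIdempotentElem e ∧ e ∈ Ideal.span ({b} : Set S)

/-- Indecomposable ring: the only idempotents are 0 and 1. -/
def IsIndecomposableRing (S : Type*) [CommRing S] : Prop :=
  ∀ e : S, IsIdempotentElem e → e = 0 ∨ e = 1

/-- Semihereditary ring: every finitely generated ideal is projective. -/
def IsSemihereditaryRing (R : Type*) [CommRing R] : Prop :=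
  ∀ I : Ideal R, I.FG → Module.Projective R I

/-- Regular range 1. -/
def HasRegularRange1 (R : Type*) [CommRing R] : Prop :=
  ∀ a b : R, Ideal.span {a, b} = ⊤ → ∃ t : R, IsRegularElem (a + b * t)

/-- Gelfand range 1. -/
def HasGelfandRange1 (R : Type*) [CommRing R] : Prop :=
  ∀ a b : R, Ideal.span {a, b} = ⊤ → ∃ t : R, IsGelfandElem (a + b * t)

/-- A rectangular matrix admits diagonal reduction with successive divisibility
of the diagonal entries. -/
def AdmitsDiagReduction {R : Type*} [CommRing R] {n m : ℕ}
    (A : Matrix (Fin n) (Fin m) R) : Prop :=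
  ∃ (P : Matrix (Fin n) (Fin n) R) (Q : Matrix (Fin m) (Fin m) R),
    IsUnit P ∧ IsUnit Q ∧
    (∀ (i : Fin n) (j : Fin m), (i : ℕ) ≠ (j : ℕ) → (P * A * Q) i j = 0) ∧
    (∀ (k : ℕ) (hn : k + 1 < n) (hm : k + 1 < m),
      (P * A * Q) ⟨k, Nat.lt_of_succ_lt hn⟩ ⟨k, Nat.lt_of_succ_lt hm⟩ ∣
        (P * A * Q) ⟨k + 1, hn⟩ ⟨k + 1, hm⟩)

/-- Elementary divisor ring: every matrix admits diagonal reduction. -/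
def IsElementaryDivisorRing (R : Type*) [CommRing R] : Prop :=
  ∀ (n m : ℕ) (A : Matrix (Fin n) (Fin m) R), AdmitsDiagReduction A


theorem stmt8 {R : Type*} [CommRing R] [IsBezout R] (hR : HasStableRange2 R)
    (a : R) (hreg : IsRegularElem a) :
    IsPseudoIrreducible a ↔ IsIndecomposableRing (R ⧸ Ideal.span ({a} : Set R)) := by
  constructor
  · intro hpi e he
    obtain ⟨x, rfl⟩ := Ideal.Quotient.mk_surjective e
    have hx : a ∣ x * x - x := by
      rw [← Ideal.mem_span_singleton]
      have : Ideal.Quotient.mk (Ideal.span {a}) (x * x - x) = 0 := by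
        rw [map_sub, map_mul, he]; ring
      rwa [Ideal.Quotient.eq_zero_iff_mem] at this
    obtain ⟨d, hd⟩ := hx
    obtain ⟨g, hg⟩ := (IsBezout.isPrincipal_of_FG (Ideal.span {x, a})
      (Submodule.fg_span (Set.toFinite _))).principal
    have hgx : g ∣ x := by
      have : x ∈ Ideal.span ({x, a} : Set R) := Ideal.subset_span (by simp)
      rw [hg] at this
      exact Ideal.mem_span_singleton.mp this
    have hga : g ∣ a := by
      have : a ∈ Ideal.span ({x, a} : Set R) := Ideal.subset_span (by simp)
      rw [hg] at this
      exact Ideal.mem_span_singleton.mp this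
    obtain ⟨x₁, hx₁⟩ := hgx
    obtain ⟨a₁, ha₁⟩ := hga
    have hgmem : g ∈ Ideal.span ({x, a} : Set R) := by
      rw [hg]; exact Ideal.subset_span rfl
    obtain ⟨α, β, hαβ⟩ := Ideal.mem_span_pair.mp hgmem
    have hgreg : ∀ y : R, g * y = 0 → y = 0 := by
      intro y hy
      apply hreg.2 y
      calc a * y = a₁ * (g * y) := by rw [ha₁]; ring
      _ = 0 := by rw [hy, mul_zero]
    have hcomb : α * x₁ + β * a₁ = 1 := by
      have h0 : α * x₁ + β * a₁ - 1 = 0 := by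
        apply hgreg
        have : g * (α * x₁ + β * a₁) = g := by
          calc g * (α * x₁ + β * a₁) = α * (g * x₁) + β * (g * a₁) := by ring
          _ = α * x + β * a := by rw [← hx₁, ← ha₁]
          _ = g := hαβ
        linear_combination this
      linear_combination h0
    have hkey : x₁ * (x - 1) = a₁ * d := by
      have h0 : x₁ * (x - 1) - a₁ * d = 0 := by
        apply hgreg
        have : g * (x₁ * (x - 1)) = g * (a₁ * d) := by
          calc g * (x₁ * (x - 1)) = (g * x₁) * x - g * x₁ := by ring
          _ = x * x - x := by rw [← hx₁]
          _ = a * d := hd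
          _ = g * (a₁ * d) := by rw [ha₁]; ring
        linear_combination this
      linear_combination h0
    -- a₁ ∣ x - 1
    have ha₁x : x - 1 = a₁ * (α * d + β * (x - 1)) := by
      calc x - 1 = (α * x₁ + β * a₁) * (x - 1) := by rw [hcomb]; ring
      _ = α * (x₁ * (x - 1)) + β * a₁ * (x - 1) := by ring
      _ = α * (a₁ * d) + β * a₁ * (x - 1) := by rw [hkey]
      _ = a₁ * (α * d + β * (x - 1)) := by ring
    -- comaximality of g and a₁
    have hco : Ideal.span ({g, a₁} : Set R) = ⊤ := by
      rw [Ideal.eq_top_iff_one, Ideal.mem_span_pair]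
      exact ⟨x₁, -(α * d + β * (x - 1)), by linear_combination ha₁x - hx₁⟩
    by_cases hgu : IsUnit g
    · -- x is a unit mod a, idempotent unit → e = 1
      right
      obtain ⟨u, hu⟩ := hgu
      -- g unit → span {x, a} = ⊤ → x unit mod a
      set Q := Ideal.Quotient.mk (Ideal.span ({a} : Set R))
      have hga0 : Q a = 0 := Ideal.Quotient.eq_zero_iff_mem.mpr (Ideal.subset_span rfl)
      have hxu : IsUnit (Q x) := by
        have h1 : (↑u⁻¹ * α) * x + (↑u⁻¹ * β) * a = 1 := by
          have : (↑u⁻¹ : R) * g = 1 := by rw [← hu]; exact u.inv_mul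
          linear_combination ↑u⁻¹ * hαβ + this
        refine IsUnit.of_mul_eq_one (Q ↑u⁻¹ * Q α) ?_
        have := congrArg Q h1
        simp only [map_add, map_mul, map_one, hga0] at this
        linear_combination this
      obtain ⟨v, hv⟩ := hxu.exists_right_inv
      calc Q x = Q x * 1 := by ring
      _ = Q x * (Q x * v) := by rw [hv]
      _ = (Q x * Q x) * v := by ring
      _ = Q x * v := by rw [show Q x * Q x = Q x from he]
      _ = 1 := hv
    · have ha₁u : IsUnit a₁ := by
        by_contra ha₁u
        exact hpi g a₁ ha₁ hgu ha₁u hco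
      left
      obtain ⟨u, hu⟩ := ha₁u
      rw [Ideal.Quotient.eq_zero_iff_mem, Ideal.mem_span_singleton]
      refine ⟨↑u⁻¹ * x₁, ?_⟩
      have hinv : a₁ * ↑u⁻¹ = 1 := by rw [← hu]; exact u.mul_inv
      calc x = g * x₁ := hx₁
      _ = g * (a₁ * ↑u⁻¹) * x₁ := by rw [hinv]; ring
      _ = a * (↑u⁻¹ * x₁) := by rw [ha₁]; ring
  · intro hind b c habc hb hc htop
    obtain ⟨u, v, huv⟩ := Ideal.mem_span_pair.mp (htop ▸ Submodule.mem_top : (1:R) ∈ Ideal.span {b,c})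
    set Q := Ideal.Quotient.mk (Ideal.span ({a} : Set R))
    have hid : IsIdempotentElem (Q (u * b)) := by
      show Q (u * b) * Q (u * b) = Q (u * b)
      rw [← map_mul, ← sub_eq_zero, ← map_sub, Ideal.Quotient.eq_zero_iff_mem,
        Ideal.mem_span_singleton]
      exact ⟨-(u * v), by linear_combination (u * b) * huv + u * v * habc⟩
    rcases hind _ hid with h0 | h1
    · rw [Ideal.Quotient.eq_zero_iff_mem, Ideal.mem_span_singleton] at h0
      obtain ⟨t, ht⟩ := h0
      exact hc (IsUnit.of_mul_eq_one (a := c) (b * t + v) (by linear_combination huv - ht - t * habc))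
    · rw [← map_one Q, Ideal.Quotient.eq, Ideal.mem_span_singleton] at h1
      obtain ⟨t, ht⟩ := h1
      exact hb (IsUnit.of_mul_eq_one (a := b) (u - c * t) (by linear_combination ht + t * habc))
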